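/- Make the change of parameters α0 = 1/ε + A0, α1 = −1/ε, α2 = A1, α3 = A2, α4 = A3, and the change of variables t = T/ε, x = εX, y = Y/ε, z = √ε·Z, w = W/√ε, in the A7^(2) Hamiltonian H_{A7}; since this change of variables is symplectic and dt = dT/ε, the transformed system is Hamiltonian with Hamiltonian H_ε(X,Y,Z,W,T) := (1/ε)·H_{A7}(εX, Y/ε, √ε·Z, W/√ε, T/ε; 1/ε+A0, −1/ε, A1, A2, A3). Then as ε → 0 this system tends to the C3^(1) system: for every (X,Y,Z,W,T) with T ≠ 0, the four partial derivatives ∂H_ε/∂Y, ∂H_ε/∂X, ∂H_ε/∂W, ∂H_ε/∂Z converge as ε → 0 to the corresponding partial derivatives of the C3^(1) Hamiltonian H_{C3}(X,Y,Z,W,T; A0,A1,A2,A3), where A0+2A1+2A2+A3 = 1. -/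

import Mathlib

/- STATEMENT 4: the confluence A7^(2) → C3^(1).  With the change of parameters
α0 = 1/ε + A0, α1 = −1/ε, α2 = A1, α3 = A2, α4 = A3 and the symplectic change of
variables t = T/ε, x = εX, y = Y/ε, z = √ε·Z, w = W/√ε (√ε taken as the complex
power ε^(1/2); Hε only involves even powers of √ε so the branch is immaterial),
the Hamiltonian of the transformed system is
Hε = (1/ε)·H_{A7}(T/ε; εX, Y/ε, √ε·Z, W/√ε; 1/ε+A0, −1/ε, A1, A2, A3),
and as ε → 0 its four partial derivatives converge, at each point with T ≠ 0,
to the partial derivatives of the C3^(1) Hamiltonian. -/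

open Complex Filter Topology

noncomputable def HA7 (a0 a1 a2 a3 a4 : ℂ) (t x y z w : ℂ) : ℂ :=
  (x^2*y^3 - ((t+1)*x + 2*a2 + a3 + a4)*x*y^2
    + (t*x^2 + (a0 + 2*a2 + a3 + a4 - (a0+a1)*t)*x + a2*(a2+a3+a4))*y
    + a1*t*x
    + (1/4) * (-(z^2*w^4) + 2*a4*z*w^3 + ((2*t-1)*z^2 - a4^2)*w^2
        - 2*(-a0 - 2*a2 - a3 - a4 + (a4+1)*t)*z*w - t*(t-1)*z^2)
    + y*((y-1)*x - a2)*z*w) / (t*(t-1))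

noncomputable def HC3 (a0 a1 a2 a3 : ℂ) (t x y z w : ℂ) : ℂ :=
  (x^2*y^3 - (t*x + 2*a1 + a2 + a3)*x*y^2 - ((a0*t - 1)*x - a1*(a1+a2+a3))*y - t*x
    - z^2*w^4/4 + (a3/2)*z*w^3 + (1/4)*(2*t*z^2 - a3^2)*w^2
    - (1/2)*((a3+1)*t - 1)*z*w - t^2*z^2/4
    + (x*y - a1)*y*z*w) / t^2

/-- The Hamiltonian of the A7^(2) system after the confluence substitution. -/
noncomputable def Heps (A0 A1 A2 A3 : ℂ) (ε T X Y Z W : ℂ) : ℂ :=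
  (1/ε) * HA7 (1/ε + A0) (-(1/ε)) A1 A2 A3
    (T/ε) (ε*X) (Y/ε) (ε ^ ((1:ℂ)/2) * Z) (W / ε ^ ((1:ℂ)/2))

/-- The common "numerator polynomial": for ε ≠ 0 one has
`Heps = Mpoly / (T*(T-ε))`, while `HC3 = Mpoly(ε=0) / (T*(T-0))`. -/
noncomputable def Mpoly (A0 A1 A2 A3 ε T X Y Z W : ℂ) : ℂ :=
  X^2*Y^3 - ((T+ε)*X + 2*A1+A2+A3)*X*Y^2
  + (ε*T*X^2 + (1 - A0*T + ε*(A0+2*A1+A2+A3))*X + A1*(A1+A2+A3))*Y - T*X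
  + (1/4)*(-(Z^2*W^4) + 2*A3*Z*W^3 + (2*T-ε)*Z^2*W^2 - A3^2*W^2
      - 2*((A3+1)*T - 1 - ε*(A0+2*A1+A2+A3))*Z*W - T*(T-ε)*Z^2)
  + Y*((Y-ε)*X - A1)*Z*W

lemma auxdiv (M s T N B : ℂ) (hs0 : s ≠ 0) (hT : T ≠ 0) (hTs : T - s^2 ≠ 0)
    (hN : N = M/(s^2)) (hB : B = T/s^2*(T/s^2-1)) :
    1/(s^2) * (N/B) = M/(T*(T-s^2)) := by
  subst hN hB
  have hK : T*(T-s^2) ≠ 0 := mul_ne_zero hT hTs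
  field_simp
  try ring

set_option maxHeartbeats 1000000 in
lemma heps_eq (A0 A1 A2 A3 ε T X Y Z W : ℂ) (hε : ε ≠ 0) (hT : T ≠ 0) (hTe : T ≠ ε) :
    Heps A0 A1 A2 A3 ε T X Y Z W = Mpoly A0 A1 A2 A3 ε T X Y Z W / (T*(T-ε)) := by
  have hs0 : (ε ^ ((1:ℂ)/2)) ≠ 0 := by
    simp [Complex.cpow_eq_zero_iff, hε]
  have hs2 : (ε ^ ((1:ℂ)/2))^2 = ε := by
    rw [sq, ← Complex.cpow_add _ _ hε]; norm_num
  unfold Heps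
  generalize hgen : ε ^ ((1:ℂ)/2) = s
  rw [hgen] at hs0 hs2
  obtain ⟨v, rfl⟩ : ∃ v, W = s * v := ⟨W/s, (mul_div_cancel₀ W hs0).symm⟩
  rw [mul_div_cancel_left₀ _ hs0]
  rw [← hs2] at hTe ⊢
  have hTs : T - s^2 ≠ 0 := sub_ne_zero.mpr hTe
  unfold HA7
  refine auxdiv _ _ _ _ _ hs0 hT hTs ?_ rfl
  have e1 : (s ^ 2 * X) ^ 2 * (Y / s ^ 2) ^ 3 = (X^2*Y^3)/s^2 := by
    field_simp
  have e2 : ((T / s ^ 2 + 1) * (s ^ 2 * X) + 2 * A1 + A2 + A3) * (s ^ 2 * X) * (Y / s ^ 2) ^ 2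
      = (((T+s^2)*X + 2*A1+A2+A3)*X*Y^2)/s^2 := by
    field_simp
  have e3 : (T / s ^ 2 * (s ^ 2 * X) ^ 2 + (1 / s ^ 2 + A0 + 2 * A1 + A2 + A3 - (1 / s ^ 2 + A0 + -(1 / s ^ 2)) * (T / s ^ 2)) * (s ^ 2 * X) + A1 * (A1 + A2 + A3)) * (Y / s ^ 2)
      = ((s^2*T*X^2 + (1 - A0*T + s^2*(A0+2*A1+A2+A3))*X + A1*(A1+A2+A3))*Y)/s^2 := by
    field_simp; ring
  have e4 : -(1 / s ^ 2) * (T / s ^ 2) * (s ^ 2 * X) = (-(T*X))/s^2 := by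
    field_simp
  have h1 : T / s ^ 2 - 1 = (T - s^2)/s^2 := by field_simp
  have h2 : T / s ^ 2 * ((T - s^2)/s^2) = T*(T-s^2)/(s^2*s^2) := div_mul_div_comm _ _ _ _
  have f1 : -((s * Z) ^ 2 * v ^ 4) = (-(Z^2*(s*v)^4))/s^2 := by
    field_simp
  have f2 : 2 * A3 * (s * Z) * v ^ 3 = (2*A3*Z*(s*v)^3)/s^2 := by
    field_simp
  have f3 : ((2 * (T / s ^ 2) - 1) * (s * Z) ^ 2 - A3 ^ 2) * v ^ 2
      = ((2*T-s^2)*Z^2*(s*v)^2 - A3^2*(s*v)^2)/s^2 := by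
    field_simp
  have f4 : 2 * (-(1 / s ^ 2 + A0) - 2 * A1 - A2 - A3 + (A3 + 1) * (T / s ^ 2)) * (s * Z) * v
      = (2*((A3+1)*T - 1 - s^2*(A0+2*A1+A2+A3))*Z*(s*v))/s^2 := by
    field_simp; ring
  have f5 : T / s ^ 2 * (T / s ^ 2 - 1) * (s * Z) ^ 2 = (T*(T-s^2)*Z^2)/s^2 := by
    rw [h1, h2]
    field_simp
  have e5 : 1 / 4 * (-((s * Z) ^ 2 * v ^ 4) + 2 * A3 * (s * Z) * v ^ 3 + ((2 * (T / s ^ 2) - 1) * (s * Z) ^ 2 - A3 ^ 2) * v ^ 2 - 2 * (-(1 / s ^ 2 + A0) - 2 * A1 - A2 - A3 + (A3 + 1) * (T / s ^ 2)) * (s * Z) * v - T / s ^ 2 * (T / s ^ 2 - 1) * (s * Z) ^ 2)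
      = ((1/4)*(-(Z^2*(s*v)^4) + 2*A3*Z*(s*v)^3 + ((2*T-s^2)*Z^2*(s*v)^2 - A3^2*(s*v)^2)
      - 2*((A3+1)*T - 1 - s^2*(A0+2*A1+A2+A3))*Z*(s*v) - T*(T-s^2)*Z^2))/s^2 := by
    rw [f1, f2, f3, f4, f5, ← add_div, ← add_div, div_sub_div_same,
      div_sub_div_same, mul_div_assoc]
  have e6 : Y / s ^ 2 * ((Y / s ^ 2 - 1) * (s ^ 2 * X) - A1) * (s * Z) * v
      = (Y*((Y-s^2)*X - A1)*Z*(s*v))/s^2 := by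
    field_simp
  rw [e1, e2, e3, e4, e5, e6, div_sub_div_same, ← add_div, ← add_div,
    ← add_div, ← add_div]
  unfold Mpoly
  congr 1
  ring

noncomputable def QY (A0 A1 A2 A3 ε T X Y Z W : ℂ) : ℂ :=
  4*0*Y^3 + 3*X^2*Y^2 + 2*(X*Z*W - ((T+ε)*X + 2*A1+A2+A3)*X)*Y
    + (ε*T*X^2 + (1 - A0*T + ε*(A0+2*A1+A2+A3))*X + A1*(A1+A2+A3) - (ε*X + A1)*Z*W)

noncomputable def QX (A0 A1 A2 A3 ε T X Y Z W : ℂ) : ℂ :=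
  4*0*X^3 + 3*0*X^2 + 2*(Y^3 - (T+ε)*Y^2 + ε*T*Y)*X
    + (-(2*A1+A2+A3)*Y^2 + (1 - A0*T + ε*(A0+2*A1+A2+A3))*Y - T + Y*(Y-ε)*Z*W)

noncomputable def QW (A0 A1 A2 A3 ε T X Y Z W : ℂ) : ℂ :=
  4*(-(1/4)*Z^2)*W^3 + 3*((1/2)*A3*Z)*W^2 + 2*((1/4)*((2*T-ε)*Z^2 - A3^2))*W
    + (-(1/2)*((A3+1)*T - 1 - ε*(A0+2*A1+A2+A3))*Z + Y*((Y-ε)*X - A1)*Z)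

noncomputable def QZ (A0 A1 A2 A3 ε T X Y Z W : ℂ) : ℂ :=
  4*0*Z^3 + 3*0*Z^2 + 2*((1/4)*(-(W^4) + (2*T-ε)*W^2 - T*(T-ε)))*Z
    + ((1/4)*(2*A3*W^3 - 2*((A3+1)*T - 1 - ε*(A0+2*A1+A2+A3))*W) + Y*((Y-ε)*X - A1)*W)

lemma deriv_quartic (a b c d e y : ℂ) :
    deriv (fun u : ℂ => a*u^4 + b*u^3 + c*u^2 + d*u + e) y
      = 4*a*y^3 + 3*b*y^2 + 2*c*y + d := by
  have p4 : HasDerivAt (fun u : ℂ => a*u^4) (4*a*y^3) y := by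
    simpa [mul_comm, mul_left_comm, mul_assoc] using (hasDerivAt_pow 4 y).const_mul a
  have p3 : HasDerivAt (fun u : ℂ => b*u^3) (3*b*y^2) y := by
    simpa [mul_comm, mul_left_comm, mul_assoc] using (hasDerivAt_pow 3 y).const_mul b
  have p2 : HasDerivAt (fun u : ℂ => c*u^2) (2*c*y) y := by
    simpa [mul_comm, mul_left_comm, mul_assoc] using (hasDerivAt_pow 2 y).const_mul c
  have p1 : HasDerivAt (fun u : ℂ => d*u) d y := by
    simpa using (hasDerivAt_id y).const_mul d
  have h := (((p4.add p3).add p2).add p1).add_const e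
  simpa using h.deriv

lemma dMY (A0 A1 A2 A3 ε T X Y Z W : ℂ) :
    deriv (fun u : ℂ => Mpoly A0 A1 A2 A3 ε T X u Z W / (T*(T-ε))) Y
      = QY A0 A1 A2 A3 ε T X Y Z W / (T*(T-ε)) := by
  rw [show (fun u : ℂ => Mpoly A0 A1 A2 A3 ε T X u Z W / (T*(T-ε)))
      = (fun u : ℂ => (0*u^4 + X^2*u^3 + (X*Z*W - ((T+ε)*X + 2*A1+A2+A3)*X)*u^2
        + (ε*T*X^2 + (1 - A0*T + ε*(A0+2*A1+A2+A3))*X + A1*(A1+A2+A3) - (ε*X + A1)*Z*W)*u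
        + (-(T*X) + (1/4)*(-(Z^2*W^4) + 2*A3*Z*W^3 + (2*T-ε)*Z^2*W^2 - A3^2*W^2
            - 2*((A3+1)*T - 1 - ε*(A0+2*A1+A2+A3))*Z*W - T*(T-ε)*Z^2)))/(T*(T-ε)))
      from funext fun u => by unfold Mpoly; ring_nf]
  rw [deriv_div_const, deriv_quartic]
  rfl

lemma dMX (A0 A1 A2 A3 ε T X Y Z W : ℂ) :
    deriv (fun u : ℂ => Mpoly A0 A1 A2 A3 ε T u Y Z W / (T*(T-ε))) X
      = QX A0 A1 A2 A3 ε T X Y Z W / (T*(T-ε)) := by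
  rw [show (fun u : ℂ => Mpoly A0 A1 A2 A3 ε T u Y Z W / (T*(T-ε)))
      = (fun u : ℂ => (0*u^4 + 0*u^3 + (Y^3 - (T+ε)*Y^2 + ε*T*Y)*u^2
        + (-(2*A1+A2+A3)*Y^2 + (1 - A0*T + ε*(A0+2*A1+A2+A3))*Y - T + Y*(Y-ε)*Z*W)*u
        + (A1*(A1+A2+A3)*Y + (1/4)*(-(Z^2*W^4) + 2*A3*Z*W^3 + (2*T-ε)*Z^2*W^2 - A3^2*W^2
            - 2*((A3+1)*T - 1 - ε*(A0+2*A1+A2+A3))*Z*W - T*(T-ε)*Z^2) - A1*Y*Z*W))/(T*(T-ε)))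
      from funext fun u => by unfold Mpoly; ring_nf]
  rw [deriv_div_const, deriv_quartic]
  rfl

lemma dMW (A0 A1 A2 A3 ε T X Y Z W : ℂ) :
    deriv (fun u : ℂ => Mpoly A0 A1 A2 A3 ε T X Y Z u / (T*(T-ε))) W
      = QW A0 A1 A2 A3 ε T X Y Z W / (T*(T-ε)) := by
  rw [show (fun u : ℂ => Mpoly A0 A1 A2 A3 ε T X Y Z u / (T*(T-ε)))
      = (fun u : ℂ => ((-(1/4)*Z^2)*u^4 + ((1/2)*A3*Z)*u^3 + ((1/4)*((2*T-ε)*Z^2 - A3^2))*u^2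
        + (-(1/2)*((A3+1)*T - 1 - ε*(A0+2*A1+A2+A3))*Z + Y*((Y-ε)*X - A1)*Z)*u
        + (X^2*Y^3 - ((T+ε)*X + 2*A1+A2+A3)*X*Y^2
          + (ε*T*X^2 + (1 - A0*T + ε*(A0+2*A1+A2+A3))*X + A1*(A1+A2+A3))*Y - T*X
          - (1/4)*T*(T-ε)*Z^2))/(T*(T-ε)))
      from funext fun u => by unfold Mpoly; ring_nf]
  rw [deriv_div_const, deriv_quartic]
  rfl

lemma dMZ (A0 A1 A2 A3 ε T X Y Z W : ℂ) :
    deriv (fun u : ℂ => Mpoly A0 A1 A2 A3 ε T X Y u W / (T*(T-ε))) Z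
      = QZ A0 A1 A2 A3 ε T X Y Z W / (T*(T-ε)) := by
  rw [show (fun u : ℂ => Mpoly A0 A1 A2 A3 ε T X Y u W / (T*(T-ε)))
      = (fun u : ℂ => (0*u^4 + 0*u^3 + ((1/4)*(-(W^4) + (2*T-ε)*W^2 - T*(T-ε)))*u^2
        + ((1/4)*(2*A3*W^3 - 2*((A3+1)*T - 1 - ε*(A0+2*A1+A2+A3))*W) + Y*((Y-ε)*X - A1)*W)*u
        + (X^2*Y^3 - ((T+ε)*X + 2*A1+A2+A3)*X*Y^2
          + (ε*T*X^2 + (1 - A0*T + ε*(A0+2*A1+A2+A3))*X + A1*(A1+A2+A3))*Y - T*X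
          - (1/4)*A3^2*W^2))/(T*(T-ε)))
      from funext fun u => by unfold Mpoly; ring_nf]
  rw [deriv_div_const, deriv_quartic]
  rfl

lemma hc3_eq (A0 A1 A2 A3 T X Y Z W : ℂ) :
    HC3 A0 A1 A2 A3 T X Y Z W = Mpoly A0 A1 A2 A3 0 T X Y Z W / (T*(T-0)) := by
  unfold HC3 Mpoly
  rw [show T*(T-(0:ℂ)) = T^2 from by ring]
  congr 1
  ring

theorem confluence_A7_to_C3 (A0 A1 A2 A3 : ℂ)
    (hrel : A0 + 2*A1 + 2*A2 + A3 = 1)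
    (T X Y Z W : ℂ) (hT : T ≠ 0) :
    Tendsto (fun ε : ℂ => deriv (fun u => Heps A0 A1 A2 A3 ε T X u Z W) Y)
      (𝓝[≠] 0) (𝓝 (deriv (fun u => HC3 A0 A1 A2 A3 T X u Z W) Y)) ∧
    Tendsto (fun ε : ℂ => deriv (fun u => Heps A0 A1 A2 A3 ε T u Y Z W) X)
      (𝓝[≠] 0) (𝓝 (deriv (fun u => HC3 A0 A1 A2 A3 T u Y Z W) X)) ∧
    Tendsto (fun ε : ℂ => deriv (fun u => Heps A0 A1 A2 A3 ε T X Y Z u) W)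
      (𝓝[≠] 0) (𝓝 (deriv (fun u => HC3 A0 A1 A2 A3 T X Y Z u) W)) ∧
    Tendsto (fun ε : ℂ => deriv (fun u => Heps A0 A1 A2 A3 ε T X Y u W) Z)
      (𝓝[≠] 0) (𝓝 (deriv (fun u => HC3 A0 A1 A2 A3 T X Y u W) Z)) := by
  have hevne : ∀ᶠ ε in 𝓝[≠] (0:ℂ), ε ≠ T :=
    Filter.Eventually.filter_mono nhdsWithin_le_nhds (eventually_ne_nhds (Ne.symm hT))
  have hK0 : T * (T - (0:ℂ)) ≠ 0 := by simp [hT]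
  refine ⟨?_, ?_, ?_, ?_⟩
  · have hL : deriv (fun u => HC3 A0 A1 A2 A3 T X u Z W) Y
        = QY A0 A1 A2 A3 0 T X Y Z W / (T*(T-0)) := by
      rw [show (fun u => HC3 A0 A1 A2 A3 T X u Z W)
          = fun u => Mpoly A0 A1 A2 A3 0 T X u Z W / (T*(T-0))
          from funext fun u => hc3_eq A0 A1 A2 A3 T X u Z W]
      exact dMY A0 A1 A2 A3 0 T X Y Z W
    rw [hL]
    have hc : ContinuousAt (fun ε : ℂ => QY A0 A1 A2 A3 ε T X Y Z W / (T*(T-ε))) 0 := by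
      apply ContinuousAt.div
      · unfold QY; fun_prop
      · fun_prop
      · exact hK0
    refine Tendsto.congr' ?_ (hc.tendsto.mono_left nhdsWithin_le_nhds)
    filter_upwards [self_mem_nhdsWithin, hevne] with ε hε hεT
    have hε0 : ε ≠ 0 := hε
    rw [show (fun u : ℂ => Heps A0 A1 A2 A3 ε T X u Z W)
        = fun u => Mpoly A0 A1 A2 A3 ε T X u Z W / (T*(T-ε))
        from funext fun u => heps_eq A0 A1 A2 A3 ε T X u Z W hε0 hT (Ne.symm hεT), dMY]
  · have hL : deriv (fun u => HC3 A0 A1 A2 A3 T u Y Z W) X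
        = QX A0 A1 A2 A3 0 T X Y Z W / (T*(T-0)) := by
      rw [show (fun u => HC3 A0 A1 A2 A3 T u Y Z W)
          = fun u => Mpoly A0 A1 A2 A3 0 T u Y Z W / (T*(T-0))
          from funext fun u => hc3_eq A0 A1 A2 A3 T u Y Z W]
      exact dMX A0 A1 A2 A3 0 T X Y Z W
    rw [hL]
    have hc : ContinuousAt (fun ε : ℂ => QX A0 A1 A2 A3 ε T X Y Z W / (T*(T-ε))) 0 := by
      apply ContinuousAt.div
      · unfold QX; fun_prop
      · fun_prop
      · exact hK0
    refine Tendsto.congr' ?_ (hc.tendsto.mono_left nhdsWithin_le_nhds)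
    filter_upwards [self_mem_nhdsWithin, hevne] with ε hε hεT
    have hε0 : ε ≠ 0 := hε
    rw [show (fun u : ℂ => Heps A0 A1 A2 A3 ε T u Y Z W)
        = fun u => Mpoly A0 A1 A2 A3 ε T u Y Z W / (T*(T-ε))
        from funext fun u => heps_eq A0 A1 A2 A3 ε T u Y Z W hε0 hT (Ne.symm hεT), dMX]
  · have hL : deriv (fun u => HC3 A0 A1 A2 A3 T X Y Z u) W
        = QW A0 A1 A2 A3 0 T X Y Z W / (T*(T-0)) := by
      rw [show (fun u => HC3 A0 A1 A2 A3 T X Y Z u)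
          = fun u => Mpoly A0 A1 A2 A3 0 T X Y Z u / (T*(T-0))
          from funext fun u => hc3_eq A0 A1 A2 A3 T X Y Z u]
      exact dMW A0 A1 A2 A3 0 T X Y Z W
    rw [hL]
    have hc : ContinuousAt (fun ε : ℂ => QW A0 A1 A2 A3 ε T X Y Z W / (T*(T-ε))) 0 := by
      apply ContinuousAt.div
      · unfold QW; fun_prop
      · fun_prop
      · exact hK0
    refine Tendsto.congr' ?_ (hc.tendsto.mono_left nhdsWithin_le_nhds)
    filter_upwards [self_mem_nhdsWithin, hevne] with ε hε hεT
    have hε0 : ε ≠ 0 := hε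
    rw [show (fun u : ℂ => Heps A0 A1 A2 A3 ε T X Y Z u)
        = fun u => Mpoly A0 A1 A2 A3 ε T X Y Z u / (T*(T-ε))
        from funext fun u => heps_eq A0 A1 A2 A3 ε T X Y Z u hε0 hT (Ne.symm hεT), dMW]
  · have hL : deriv (fun u => HC3 A0 A1 A2 A3 T X Y u W) Z
        = QZ A0 A1 A2 A3 0 T X Y Z W / (T*(T-0)) := by
      rw [show (fun u => HC3 A0 A1 A2 A3 T X Y u W)
          = fun u => Mpoly A0 A1 A2 A3 0 T X Y u W / (T*(T-0))
          from funext fun u => hc3_eq A0 A1 A2 A3 T X Y u W]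
      exact dMZ A0 A1 A2 A3 0 T X Y Z W
    rw [hL]
    have hc : ContinuousAt (fun ε : ℂ => QZ A0 A1 A2 A3 ε T X Y Z W / (T*(T-ε))) 0 := by
      apply ContinuousAt.div
      · unfold QZ; fun_prop
      · fun_prop
      · exact hK0
    refine Tendsto.congr' ?_ (hc.tendsto.mono_left nhdsWithin_le_nhds)
    filter_upwards [self_mem_nhdsWithin, hevne] with ε hε hεT
    have hε0 : ε ≠ 0 := hε
    rw [show (fun u : ℂ => Heps A0 A1 A2 A3 ε T X Y u W)
        = fun u => Mpoly A0 A1 A2 A3 ε T X Y u W / (T*(T-ε))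
        from funext fun u => heps_eq A0 A1 A2 A3 ε T X Y u W hε0 hT (Ne.symm hεT), dMZ]
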